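/- arXiv:2209.06983 — 2 statements merged into one kernel-verified Lean document; each statement's English description precedes it below -/
import Mathlib

section
/- Let X_1,...,X_T be a martingale difference sequence adapted to a filtration (F_0,...,F_{T−1}) with |X_t| ≤ b almost surely. Let V_T = ∑_{t=1}^T E[X_t² | F_{t−1}]. Then for every a, v > 0, P({∑_{t=1}^T X_t ≥ a} ∩ {V_T ≤ v}) ≤ exp(−a²/(2v + 2ab/3)). -/
open MeasureTheory
set_option maxHeartbeats 1600000


lemma freedman_aux_exp_neg (u : ℝ) (hu : u ≤ 0) : Real.exp u ≤ 1 + u + u ^ 2 / 2 := by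
  have hanti : Antitone (fun u : ℝ => 1 + u + u ^ 2 / 2 - Real.exp u) := by
    apply antitone_of_deriv_nonpos
    · fun_prop
    · intro x
      have h : HasDerivAt (fun u : ℝ => 1 + u + u ^ 2 / 2 - Real.exp u)
          (1 + x - Real.exp x) x := by
        have := ((hasDerivAt_id x).const_add 1).add
          (((hasDerivAt_pow 2 x)).div_const 2)
        have h2 := this.sub (Real.hasDerivAt_exp x)
        refine h2.congr_deriv ?_
        ring
      rw [h.deriv]
      linarith [Real.add_one_le_exp x]
  have := hanti hu
  simp [Real.exp_zero] at this
  linarith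

lemma freedman_aux_p_nonneg : ∀ u : ℝ, 0 ≤ u → 0 ≤ (u - 2) * Real.exp u + u + 2 := by
  have hp' : ∀ u : ℝ, 0 ≤ u → 0 ≤ (u - 1) * Real.exp u + 1 := by
    intro u hu
    rcases le_or_gt 1 u with h | h
    · nlinarith [Real.exp_pos u]
    · have h1 : 1 - u ≤ Real.exp (-u) := by linarith [Real.add_one_le_exp (-u)]
      have h2 : (1 - u) * Real.exp u ≤ Real.exp (-u) * Real.exp u :=
        mul_le_mul_of_nonneg_right h1 (Real.exp_pos u).le
      rw [← Real.exp_add] at h2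
      simp at h2
      nlinarith
  have hmono : MonotoneOn (fun u : ℝ => (u - 2) * Real.exp u + u + 2) (Set.Ici 0) := by
    apply monotoneOn_of_deriv_nonneg (convex_Ici 0)
    · fun_prop
    · intro x _
      apply DifferentiableAt.differentiableWithinAt
      fun_prop
    · intro x hx
      rw [interior_Ici] at hx
      have h : HasDerivAt (fun u : ℝ => (u - 2) * Real.exp u + u + 2)
          ((x - 1) * Real.exp x + 1) x := by
        have := (((hasDerivAt_id x).sub_const 2).mul (Real.hasDerivAt_exp x)).add
          ((hasDerivAt_id x).add_const 2)
        refine (this.congr_of_eventuallyEq (Filter.Eventually.of_forall fun u => by simp only [Pi.mul_apply, Pi.add_apply, id_eq]; ring)).congr_deriv ?_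
        · simp only [id_eq]; ring
      rw [h.deriv]
      exact hp' x (le_of_lt hx)
  intro u hu
  have := hmono (Set.self_mem_Ici) (Set.mem_Ici.2 hu) hu
  simp [Real.exp_zero] at this
  linarith

lemma freedman_aux_F_nonneg (u : ℝ) (hu : 0 ≤ u) :
    0 ≤ u ^ 2 - (2 - 2 * u / 3) * (Real.exp u - 1 - u) := by
  have hmono : MonotoneOn (fun u : ℝ => u ^ 2 - (2 - 2 * u / 3) * (Real.exp u - 1 - u))
      (Set.Ici 0) := by
    apply monotoneOn_of_deriv_nonneg (convex_Ici 0)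
    · fun_prop
    · intro x _
      apply DifferentiableAt.differentiableWithinAt
      fun_prop
    · intro x hx
      rw [interior_Ici] at hx
      have h : HasDerivAt (fun u : ℝ => u ^ 2 - (2 - 2 * u / 3) * (Real.exp u - 1 - u))
          (2 / 3 * ((x - 2) * Real.exp x + x + 2)) x := by
        have h1 : HasDerivAt (fun u : ℝ => 2 - 2 * u / 3) (-(2 / 3)) x := by
          have := (((hasDerivAt_id x).const_mul 2).div_const 3).const_sub 2
          refine this.congr_deriv ?_
          norm_num
        have h2 : HasDerivAt (fun u : ℝ => Real.exp u - 1 - u)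
            (Real.exp x - 1) x := by
          have := ((Real.hasDerivAt_exp x).sub_const 1).sub (hasDerivAt_id x)
          exact this
        have := (hasDerivAt_pow 2 x).sub (h1.mul h2)
        refine this.congr_deriv ?_
        ring
      rw [h.deriv]
      have := freedman_aux_p_nonneg x (le_of_lt hx)
      linarith
  have := hmono (Set.self_mem_Ici) (Set.mem_Ici.2 hu) hu
  simp [Real.exp_zero] at this
  linarith

lemma freedman_aux_exp_pos (u : ℝ) (hu : 0 ≤ u) (hu3 : u < 3) :
    Real.exp u ≤ 1 + u + u ^ 2 / (2 * (1 - u / 3)) := by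
  have hden : 0 < 2 * (1 - u / 3) := by linarith
  have hF := freedman_aux_F_nonneg u hu
  have : Real.exp u - 1 - u ≤ u ^ 2 / (2 * (1 - u / 3)) := by
    rw [le_div_iff₀ hden]
    nlinarith
  linarith

lemma freedman_aux_key (l b x : ℝ) (hl : 0 < l) (hb : 0 < b) (hlb : l * b < 3)
    (hx : |x| ≤ b) :
    Real.exp (l * x) ≤ 1 + l * x + l ^ 2 / (2 * (1 - l * b / 3)) * x ^ 2 := by
  have hlb0 : 0 < l * b := mul_pos hl hb
  have hden : 0 < 2 * (1 - l * b / 3) := by linarith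
  rcases le_or_gt x 0 with hx0 | hx0
  · have h := freedman_aux_exp_neg (l * x) (by nlinarith)
    have e1 : l ^ 2 / 2 ≤ l ^ 2 / (2 * (1 - l * b / 3)) :=
      div_le_div_of_nonneg_left (sq_nonneg l) hden (by linarith)
    have h2 : (l * x) ^ 2 / 2 ≤ l ^ 2 / (2 * (1 - l * b / 3)) * x ^ 2 := by
      have e2 : (l * x) ^ 2 / 2 = l ^ 2 / 2 * x ^ 2 := by ring
      rw [e2]
      exact mul_le_mul_of_nonneg_right e1 (sq_nonneg x)
    calc Real.exp (l * x) ≤ 1 + l * x + (l * x) ^ 2 / 2 := h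
      _ ≤ _ := by nlinarith [sq_nonneg (l*x)]
  · have hu : 0 ≤ l * x := by positivity
    have hub : l * x ≤ l * b := by
      have : x ≤ b := (abs_le.1 hx).2
      nlinarith
    have h := freedman_aux_exp_pos (l * x) hu (lt_of_le_of_lt hub hlb)
    have hden2 : 0 < 2 * (1 - l * x / 3) := by linarith
    have e1 : l ^ 2 / (2 * (1 - l * x / 3)) ≤ l ^ 2 / (2 * (1 - l * b / 3)) :=
      div_le_div_of_nonneg_left (sq_nonneg l) hden (by linarith)
    have h2 : (l * x) ^ 2 / (2 * (1 - l * x / 3)) ≤ l ^ 2 / (2 * (1 - l * b / 3)) * x ^ 2 := by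
      have e2 : (l * x) ^ 2 / (2 * (1 - l * x / 3)) = l ^ 2 / (2 * (1 - l * x / 3)) * x ^ 2 := by
        ring
      rw [e2]
      exact mul_le_mul_of_nonneg_right e1 (sq_nonneg x)
    calc Real.exp (l * x) ≤ 1 + l * x + (l * x) ^ 2 / (2 * (1 - l * x / 3)) := h
      _ ≤ _ := by linarith

/-- Freedman's inequality: for a martingale difference sequence `X_1, …, X_T` with
`|X_t| ≤ b` a.s. and sum of conditional variances `V_T = ∑_t E[X_t² | F_{t−1}]`, for
every `a, v > 0`,
`P({∑_t X_t ≥ a} ∩ {V_T ≤ v}) ≤ exp(−a²/(2v + 2ab/3))`. -/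
theorem stmt4 {Ω : Type*} {m0 : MeasurableSpace Ω} {μ : Measure Ω} [IsProbabilityMeasure μ]
    (ℱ : Filtration ℕ m0) (T : ℕ) (X : ℕ → Ω → ℝ)
    (hadapt : ∀ t ∈ Finset.Icc 1 T, StronglyMeasurable[ℱ t] (X t))
    (hint : ∀ t, Integrable (X t) μ)
    (hmds : ∀ t ∈ Finset.Icc 1 T, μ[X t | ℱ (t - 1)] =ᵐ[μ] 0)
    (b : ℝ) (hb : 0 < b) (hbdd : ∀ t ∈ Finset.Icc 1 T, ∀ᵐ ω ∂μ, |X t ω| ≤ b)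
    (a v : ℝ) (ha : 0 < a) (hv : 0 < v) :
    (μ ({ω | a ≤ ∑ t ∈ Finset.Icc 1 T, X t ω} ∩
        {ω | ∑ t ∈ Finset.Icc 1 T, (μ[(fun ω' => X t ω' ^ 2) | ℱ (t - 1)]) ω ≤ v})).toReal ≤
      Real.exp (-a ^ 2 / (2 * v + 2 * a * b / 3)) := by
  classical
  -- constants
  set c : ℝ := v + a * b / 3 with hcdef
  have hc0 : 0 < c := by positivity
  set l : ℝ := a / c with hldef
  have hl : 0 < l := div_pos ha hc0
  have hlb3 : l * b < 3 := by
    rw [hldef, div_mul_eq_mul_div, div_lt_iff₀ hc0]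
    rw [hcdef]; nlinarith
  have hden : 0 < 2 * (1 - l * b / 3) := by linarith
  set g : ℝ := l ^ 2 / (2 * (1 - l * b / 3)) with hgdef
  have hg : 0 < g := div_pos (by positivity) hden
  set CV : ℕ → Ω → ℝ := fun t => μ[(fun ω' => X t ω' ^ 2) | ℱ (t - 1)] with hCVdef
  -- helper: integrability from ae bound
  have hbd_int : ∀ (f : Ω → ℝ) (C : ℝ), AEStronglyMeasurable f μ →
      (∀ᵐ ω ∂μ, |f ω| ≤ C) → Integrable f μ := fun f C hf h =>
    (memLp_top_of_bound hf C (h.mono fun ω hω => by rwa [Real.norm_eq_abs])).integrable le_top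
  -- X² integrable
  have hX2sm : ∀ s, AEStronglyMeasurable (fun ω => X s ω ^ 2) μ := by
    intro s
    exact (hint s).1.pow 2
  have hX2int : ∀ s ∈ Finset.Icc 1 T, Integrable (fun ω => X s ω ^ 2) μ := by
    intro s hs
    refine hbd_int _ (b ^ 2) (hX2sm s) ?_
    filter_upwards [hbdd s hs] with ω h
    rw [abs_pow, ← sq_abs]
    have h0 : (0:ℝ) ≤ |X s ω| := abs_nonneg _
    rw [sq_abs, ← abs_pow]
    calc |X s ω ^ 2| = |X s ω| ^ 2 := by rw [abs_pow, sq_abs]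
      _ ≤ b ^ 2 := by nlinarith
  -- CV bounds
  have hCV0 : ∀ s ∈ Finset.Icc 1 T, (0:Ω → ℝ) ≤ᵐ[μ] CV s := fun s _ =>
    condExp_nonneg (Filter.Eventually.of_forall fun ω => sq_nonneg _)
  have hCVb : ∀ s ∈ Finset.Icc 1 T, CV s ≤ᵐ[μ] fun _ => b ^ 2 := by
    intro s hs
    have h1 : (fun ω => X s ω ^ 2) ≤ᵐ[μ] fun _ => b ^ 2 := by
      filter_upwards [hbdd s hs] with ω h
      have : X s ω ^ 2 = |X s ω| ^ 2 := (sq_abs _).symm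
      rw [this]
      nlinarith [abs_nonneg (X s ω)]
    calc CV s ≤ᵐ[μ] μ[(fun _ => b ^ 2) | ℱ (s-1)] :=
          condExp_mono (hX2int s hs) (integrable_const _) h1
      _ =ᵐ[μ] fun _ => b ^ 2 := Filter.EventuallyEq.of_eq (condExp_const (ℱ.le (s-1)) _)
  -- global good event
  have hgood : ∀ᵐ ω ∂μ, ∀ s ∈ Finset.Icc 1 T,
      |X s ω| ≤ b ∧ 0 ≤ CV s ω ∧ CV s ω ≤ b ^ 2 := by
    have h := (MeasureTheory.ae_ball_iff (Finset.Icc 1 T : Finset ℕ).countable_toSet).2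
      (fun s (hs : s ∈ (Finset.Icc 1 T : Finset ℕ)) => by
        filter_upwards [hbdd s hs, hCV0 s hs, hCVb s hs] with ω h1 h2 h3
        exact (⟨h1, h2, h3⟩ : |X s ω| ≤ b ∧ 0 ≤ CV s ω ∧ CV s ω ≤ b ^ 2))
    filter_upwards [h] with ω hω s hs
    exact hω s hs
  -- measurability of partial sums
  have hSmeas : ∀ t, t ≤ T → StronglyMeasurable[ℱ t] (fun ω => ∑ s ∈ Finset.Icc 1 t, X s ω) := by
    intro t ht
    apply Finset.stronglyMeasurable_fun_sum
    intro s hs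
    rcases Finset.mem_Icc.1 hs with ⟨hs1, hs2⟩
    exact (hadapt s (Finset.mem_Icc.2 ⟨hs1, le_trans hs2 ht⟩)).mono (ℱ.mono hs2)
  have hWmeas : ∀ n t : ℕ, n ≤ t + 1 →
      StronglyMeasurable[ℱ t] (fun ω => ∑ s ∈ Finset.Icc 1 n, CV s ω) := by
    intro n t hn
    apply Finset.stronglyMeasurable_fun_sum
    intro s hs
    rcases Finset.mem_Icc.1 hs with ⟨hs1, hs2⟩
    have : s - 1 ≤ t := by omega
    exact stronglyMeasurable_condExp.mono (ℱ.mono this)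
  -- ae bounds on partial sums
  have hSbd : ∀ t, t ≤ T → ∀ᵐ ω ∂μ,
      |∑ s ∈ Finset.Icc 1 t, X s ω| ≤ t * b := by
    intro t ht
    filter_upwards [hgood] with ω h
    calc |∑ s ∈ Finset.Icc 1 t, X s ω| ≤ ∑ s ∈ Finset.Icc 1 t, |X s ω| :=
          Finset.abs_sum_le_sum_abs _ _
      _ ≤ ∑ s ∈ Finset.Icc 1 t, b := by
          apply Finset.sum_le_sum
          intro s hs
          rcases Finset.mem_Icc.1 hs with ⟨hs1, hs2⟩
          exact (h s (Finset.mem_Icc.2 ⟨hs1, le_trans hs2 ht⟩)).1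
      _ = t * b := by simp [Nat.card_Icc]
  have hWbd : ∀ n, n ≤ T → ∀ᵐ ω ∂μ,
      0 ≤ ∑ s ∈ Finset.Icc 1 n, CV s ω ∧ ∑ s ∈ Finset.Icc 1 n, CV s ω ≤ n * b ^ 2 := by
    intro n hn
    filter_upwards [hgood] with ω h
    constructor
    · apply Finset.sum_nonneg
      intro s hs
      rcases Finset.mem_Icc.1 hs with ⟨hs1, hs2⟩
      exact (h s (Finset.mem_Icc.2 ⟨hs1, le_trans hs2 hn⟩)).2.1
    · calc ∑ s ∈ Finset.Icc 1 n, CV s ω ≤ ∑ s ∈ Finset.Icc 1 n, b ^ 2 := by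
            apply Finset.sum_le_sum
            intro s hs
            rcases Finset.mem_Icc.1 hs with ⟨hs1, hs2⟩
            exact (h s (Finset.mem_Icc.2 ⟨hs1, le_trans hs2 hn⟩)).2.2
        _ = n * b ^ 2 := by simp [Nat.card_Icc]
  -- the supermartingale estimate by induction
  have key : ∀ t, t ≤ T →
      ∫ ω, Real.exp (l * (∑ s ∈ Finset.Icc 1 t, X s ω) - g * (∑ s ∈ Finset.Icc 1 t, CV s ω)) ∂μ
        ≤ 1 := by
    intro t
    induction t with
    | zero => intro _; simp
    | succ t ih =>
      intro ht1
      have htT : t ≤ T := by omega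
      have hmem : t + 1 ∈ Finset.Icc 1 T := Finset.mem_Icc.2 ⟨by omega, ht1⟩
      have h1t1 : (1:ℕ) ≤ t + 1 := by omega
      -- names
      set Y : Ω → ℝ := fun ω =>
        Real.exp (l * (∑ s ∈ Finset.Icc 1 t, X s ω) - g * (∑ s ∈ Finset.Icc 1 (t+1), CV s ω))
        with hYdef
      set E : Ω → ℝ := fun ω => Real.exp (l * X (t+1) ω) with hEdef
      have hYmeas : StronglyMeasurable[ℱ t] Y :=
        Real.continuous_exp.comp_stronglyMeasurable
          (((hSmeas t htT).const_mul l).sub ((hWmeas (t+1) t le_rfl).const_mul g))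
      have hYbd : ∀ᵐ ω ∂μ, |Y ω| ≤ Real.exp (l * (t * b)) := by
        filter_upwards [hSbd t htT, hWbd (t+1) ht1] with ω h1 h2
        rw [hYdef, abs_of_nonneg (Real.exp_pos _).le]
        apply Real.exp_le_exp.2
        have := (abs_le.1 h1).2
        nlinarith [h2.1, hg.le]
      have hEbd : ∀ᵐ ω ∂μ, |E ω| ≤ Real.exp (l * b) := by
        filter_upwards [hbdd (t+1) hmem] with ω h
        rw [hEdef, abs_of_nonneg (Real.exp_pos _).le]
        apply Real.exp_le_exp.2
        have := (abs_le.1 h).2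
        nlinarith
      have hYsm : AEStronglyMeasurable Y μ := (hYmeas.mono (ℱ.le t)).aestronglyMeasurable
      have hEsm : AEStronglyMeasurable E μ :=
        (Real.continuous_exp.comp_aestronglyMeasurable ((hint (t+1)).1.const_smul l))
      have hYint : Integrable Y μ := hbd_int Y _ hYsm hYbd
      have hEint : Integrable E μ := hbd_int E _ hEsm hEbd
      have hYEint : Integrable (Y * E) μ := by
        refine hbd_int _ (Real.exp (l * (t * b)) * Real.exp (l * b)) (hYsm.mul hEsm) ?_
        filter_upwards [hYbd, hEbd] with ω h1 h2
        rw [Pi.mul_apply, abs_mul]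
        exact mul_le_mul h1 h2 (abs_nonneg _) (Real.exp_pos _).le
      -- conditional expectation bound on E
      have hCE : μ[E | ℱ t] ≤ᵐ[μ] fun ω => Real.exp (g * CV (t+1) ω) := by
        have hpt : E ≤ᵐ[μ] fun ω => 1 + l * X (t+1) ω + g * X (t+1) ω ^ 2 := by
          filter_upwards [hbdd (t+1) hmem] with ω h
          rw [hEdef]
          have := freedman_aux_key l b (X (t+1) ω) hl hb hlb3 h
          rw [← hgdef] at this
          exact this
        have hRint : Integrable (fun ω => 1 + l * X (t+1) ω + g * X (t+1) ω ^ 2) μ := by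
          refine hbd_int _ (1 + l * b + g * b ^ 2) ?_ ?_
          · exact (aestronglyMeasurable_const.add ((hint (t+1)).1.const_smul l)).add
              ((hX2sm (t+1)).const_smul g)
          · filter_upwards [hbdd (t+1) hmem] with ω h
            have h1 := (abs_le.1 h).1
            have h2 := (abs_le.1 h).2
            have h3 : X (t+1) ω ^ 2 ≤ b ^ 2 := by nlinarith
            have h4 : X (t+1) ω ^ 2 ≥ 0 := sq_nonneg _
            rw [abs_le]
            constructor <;> nlinarith [hg.le, hl.le]
        have hmono := condExp_mono (m := ℱ t) hEint hRint hpt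
        -- linearity
        have hsplit : (fun ω => 1 + l * X (t+1) ω + g * X (t+1) ω ^ 2) =
            (fun _ => (1:ℝ)) + (l • X (t+1) + g • fun ω => X (t+1) ω ^ 2) := by
          funext ω; simp [smul_eq_mul]; ring
        have hlin : μ[(fun ω => 1 + l * X (t+1) ω + g * X (t+1) ω ^ 2) | ℱ t] =ᵐ[μ]
            fun ω => 1 + (l * (μ[X (t+1) | ℱ t]) ω + g * CV (t+1) ω) := by
          rw [hsplit]
          calc μ[((fun _ => (1:ℝ)) + (l • X (t+1) + g • fun ω => X (t+1) ω ^ 2)) | ℱ t]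
              =ᵐ[μ] μ[(fun _ => (1:ℝ)) | ℱ t] + μ[(l • X (t+1) + g • fun ω => X (t+1) ω ^ 2) | ℱ t] :=
                condExp_add (integrable_const _)
                  (((hint (t+1)).smul l).add ((hX2int (t+1) hmem).smul g)) _
            _ =ᵐ[μ] fun ω => 1 + (l * (μ[X (t+1) | ℱ t]) ω + g * CV (t+1) ω) := by
                have e1 : μ[(fun _ => (1:ℝ)) | ℱ t] =ᵐ[μ] fun _ => (1:ℝ) :=
                  Filter.EventuallyEq.of_eq (condExp_const (ℱ.le t) _)
                have e2 : μ[(l • X (t+1) + g • fun ω => X (t+1) ω ^ 2) | ℱ t] =ᵐ[μ]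
                    μ[l • X (t+1) | ℱ t] + μ[g • (fun ω => X (t+1) ω ^ 2) | ℱ t] :=
                  condExp_add ((hint (t+1)).smul l) ((hX2int (t+1) hmem).smul g) _
                have e3 : μ[l • X (t+1) | ℱ t] =ᵐ[μ] l • μ[X (t+1) | ℱ t] := condExp_smul _ _ _
                have e4 : μ[g • (fun ω => X (t+1) ω ^ 2) | ℱ t] =ᵐ[μ]
                    g • μ[(fun ω => X (t+1) ω ^ 2) | ℱ t] := condExp_smul _ _ _
                have e5 : CV (t+1) = μ[(fun ω => X (t+1) ω ^ 2) | ℱ t] := by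
                  rw [hCVdef]; simp
                filter_upwards [e1, e2, e3, e4] with ω f1 f2 f3 f4
                simp only [Pi.add_apply] at *
                rw [f1, f2, f3, f4, e5]
                simp [smul_eq_mul]
        have hzero : μ[X (t+1) | ℱ t] =ᵐ[μ] 0 := by
          have := hmds (t+1) hmem
          simpa using this
        filter_upwards [hmono, hlin, hzero, hCV0 (t+1) hmem] with ω f1 f2 f3 f4
        rw [f2] at f1
        rw [f3] at f1
        simp only [Pi.zero_apply, mul_zero, zero_add] at f1
        calc (μ[E | ℱ t]) ω ≤ 1 + g * CV (t+1) ω := by linarith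
          _ ≤ Real.exp (g * CV (t+1) ω) := by linarith [Real.add_one_le_exp (g * CV (t+1) ω)]
      -- condexp of E bounded
      have hCEbd : ∀ᵐ ω ∂μ, |(μ[E | ℱ t]) ω| ≤ Real.exp (l * b) := by
        have hup : μ[E | ℱ t] ≤ᵐ[μ] μ[(fun _ => Real.exp (l * b)) | ℱ t] := by
          apply condExp_mono (m := ℱ t) hEint (integrable_const _)
          filter_upwards [hEbd] with ω h
          exact le_trans (le_abs_self _) h
        have hlo : (0:Ω → ℝ) ≤ᵐ[μ] μ[E | ℱ t] :=
          condExp_nonneg (m := ℱ t) (Filter.Eventually.of_forall fun ω => (Real.exp_pos _).le)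
        rw [condExp_const (ℱ.le t)] at hup
        filter_upwards [hup, hlo] with ω h1 h2
        simp only [Pi.zero_apply] at h2
        rw [abs_le]
        exact ⟨by linarith [Real.exp_pos (l*b)], h1⟩
      have hCEint : Integrable (fun ω => Y ω * (μ[E | ℱ t]) ω) μ := by
        refine hbd_int _ (Real.exp (l * (t * b)) * Real.exp (l * b))
          (hYsm.mul (stronglyMeasurable_condExp.mono (ℱ.le t)).aestronglyMeasurable) ?_
        filter_upwards [hYbd, hCEbd] with ω h1 h2
        rw [abs_mul]
        exact mul_le_mul h1 h2 (abs_nonneg _) (Real.exp_pos _).le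
      have hYexpCVint : Integrable (fun ω => Y ω * Real.exp (g * CV (t+1) ω)) μ := by
        refine hbd_int _ (Real.exp (l * (t * b)) * Real.exp (g * b ^ 2)) ?_ ?_
        · exact hYsm.mul (Real.continuous_exp.comp_aestronglyMeasurable
            (((stronglyMeasurable_condExp.mono (ℱ.le ((t+1)-1))).aestronglyMeasurable).const_smul g))
        · filter_upwards [hYbd, hCV0 (t+1) hmem, hCVb (t+1) hmem] with ω h1 h2 h3
          rw [abs_mul]
          have : |Real.exp (g * CV (t+1) ω)| ≤ Real.exp (g * b ^ 2) := by
            rw [abs_of_nonneg (Real.exp_pos _).le]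
            apply Real.exp_le_exp.2
            exact mul_le_mul_of_nonneg_left h3 hg.le
          exact mul_le_mul h1 this (abs_nonneg _) (Real.exp_pos _).le
      -- the chain
      have edecomp : (fun ω => Real.exp (l * (∑ s ∈ Finset.Icc 1 (t+1), X s ω) -
          g * (∑ s ∈ Finset.Icc 1 (t+1), CV s ω))) = fun ω => Y ω * E ω := by
        funext ω
        rw [hYdef, hEdef, ← Real.exp_add]
        congr 1
        rw [Finset.sum_Icc_succ_top h1t1]
        ring
      rw [edecomp]
      have step1 : ∫ ω, Y ω * E ω ∂μ = ∫ ω, (μ[Y * E | ℱ t]) ω ∂μ := by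
        rw [integral_condExp (ℱ.le t)]
        rfl
      have step2 : ∫ ω, (μ[Y * E | ℱ t]) ω ∂μ = ∫ ω, Y ω * (μ[E | ℱ t]) ω ∂μ := by
        apply integral_congr_ae
        exact (condExp_mul_of_stronglyMeasurable_left hYmeas hYEint hEint).mono fun ω h => by
          rw [h]; rfl
      have step3 : ∫ ω, Y ω * (μ[E | ℱ t]) ω ∂μ ≤
          ∫ ω, Y ω * Real.exp (g * CV (t+1) ω) ∂μ := by
        apply integral_mono_ae hCEint hYexpCVint
        filter_upwards [hCE] with ω h
        exact mul_le_mul_of_nonneg_left h (Real.exp_pos _).le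
      have step4 : (fun ω => Y ω * Real.exp (g * CV (t+1) ω)) = fun ω =>
          Real.exp (l * (∑ s ∈ Finset.Icc 1 t, X s ω) - g * (∑ s ∈ Finset.Icc 1 t, CV s ω)) := by
        funext ω
        rw [hYdef, ← Real.exp_add]
        congr 1
        rw [Finset.sum_Icc_succ_top h1t1]
        ring
      calc ∫ ω, Y ω * E ω ∂μ = ∫ ω, Y ω * (μ[E | ℱ t]) ω ∂μ := by rw [step1, step2]
        _ ≤ ∫ ω, Y ω * Real.exp (g * CV (t+1) ω) ∂μ := step3
        _ = ∫ ω, Real.exp (l * (∑ s ∈ Finset.Icc 1 t, X s ω) -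
              g * (∑ s ∈ Finset.Icc 1 t, CV s ω)) ∂μ := by rw [step4]
        _ ≤ 1 := ih htT
  -- Chernoff step
  set A : Set Ω := {ω | a ≤ ∑ t ∈ Finset.Icc 1 T, X t ω} ∩
      {ω | ∑ t ∈ Finset.Icc 1 T, CV t ω ≤ v} with hAdef
  set Z : Ω → ℝ := fun ω =>
    Real.exp (l * (∑ s ∈ Finset.Icc 1 T, X s ω) - g * (∑ s ∈ Finset.Icc 1 T, CV s ω)) with hZdef
  have hZsm : AEStronglyMeasurable Z μ :=
    ((Real.continuous_exp.comp_stronglyMeasurable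
      (((hSmeas T le_rfl).const_mul l).sub
        ((hWmeas T T (by omega)).const_mul g))).mono (ℱ.le T)).aestronglyMeasurable
  have hZint : Integrable Z μ := by
    refine hbd_int Z (Real.exp (l * (T * b))) hZsm ?_
    filter_upwards [hSbd T le_rfl, hWbd T le_rfl] with ω h1 h2
    rw [hZdef, abs_of_nonneg (Real.exp_pos _).le]
    apply Real.exp_le_exp.2
    have := (abs_le.1 h1).2
    nlinarith [h2.1, hg.le]
  have hSm : Measurable (fun ω => ∑ s ∈ Finset.Icc 1 T, X s ω) :=
    ((hSmeas T le_rfl).mono (ℱ.le T)).measurable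
  have hWm : Measurable (fun ω => ∑ s ∈ Finset.Icc 1 T, CV s ω) :=
    ((hWmeas T T (by omega)).mono (ℱ.le T)).measurable
  have hA : MeasurableSet A :=
    (measurableSet_le measurable_const hSm).inter (measurableSet_le hWm measurable_const)
  have hmuA : (μ A).toReal * Real.exp (l * a - g * v) ≤ 1 := by
    have c1 : (μ A).toReal * Real.exp (l * a - g * v) =
        ∫ _ω in A, Real.exp (l * a - g * v) ∂μ := by
      rw [setIntegral_const, smul_eq_mul, measureReal_def]
    rw [c1]
    have c2 : ∫ _ω in A, Real.exp (l * a - g * v) ∂μ ≤ ∫ ω in A, Z ω ∂μ := by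
      apply setIntegral_mono_on (integrableOn_const (measure_lt_top μ A).ne)
        hZint.integrableOn hA
      intro ω hω
      rcases hω with ⟨hω1, hω2⟩
      have hω1' : a ≤ ∑ s ∈ Finset.Icc 1 T, X s ω := hω1
      have hω2' : ∑ s ∈ Finset.Icc 1 T, CV s ω ≤ v := hω2
      apply Real.exp_le_exp.2
      have e1 : l * a ≤ l * ∑ s ∈ Finset.Icc 1 T, X s ω :=
        mul_le_mul_of_nonneg_left hω1' hl.le
      have e2 : g * ∑ s ∈ Finset.Icc 1 T, CV s ω ≤ g * v :=
        mul_le_mul_of_nonneg_left hω2' hg.le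
      linarith
    have c3 : ∫ ω in A, Z ω ∂μ ≤ ∫ ω, Z ω ∂μ :=
      setIntegral_le_integral hZint
        (Filter.Eventually.of_forall fun ω => (Real.exp_pos _).le)
    exact le_trans (le_trans c2 c3) (key T le_rfl)
  have hexp : (0:ℝ) < Real.exp (l * a - g * v) := Real.exp_pos _
  have hfin : (μ A).toReal ≤ Real.exp (g * v - l * a) := by
    have : (μ A).toReal ≤ 1 / Real.exp (l * a - g * v) := by
      rw [le_div_iff₀ hexp]
      exact hmuA
    calc (μ A).toReal ≤ 1 / Real.exp (l * a - g * v) := this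
      _ = Real.exp (-(l * a - g * v)) := by rw [Real.exp_neg, one_div]
      _ = Real.exp (g * v - l * a) := by ring_nf
  have harith : g * v - l * a = -a ^ 2 / (2 * v + 2 * a * b / 3) := by
    have e1 : 1 - l * b / 3 = v / c := by
      rw [hldef]
      field_simp
      rw [hcdef]
      ring
    have e2 : (2:ℝ) * v + 2 * a * b / 3 = 2 * c := by rw [hcdef]; ring
    rw [hgdef, e1, e2, hldef]
    have hv' : v ≠ 0 := ne_of_gt hv
    have hc' : c ≠ 0 := ne_of_gt hc0
    field_simp
    ring
  rw [← harith]
  exact hfin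
end

section
/- Let H be a Hilbert space and (N_t)_{t=0}^∞ an H-valued martingale with N_0 = 0 such that ||N_t − N_{t−1}||_H ≤ b_t almost surely for constants b_t > 0. Then for each t and any x > 0, P(||N_t||_H > x) ≤ 4·exp(−x²/(8∑_{τ=1}^t b_τ²)). Consequently, with probability at least 1 − δ, ||N_t||_H ≤ sqrt(8·(∑_{τ=1}^t b_τ²)·log(4/δ)). -/
open MeasureTheory

section Aux

open Filter Topology

private lemma aux_cosh_le_exp_sq (z : ℝ) : Real.cosh z ≤ Real.exp (z ^ 2) := by
  have h1 : 0 < 1 - z + z ^ 2 := by nlinarith [sq_nonneg (2 * z - 1)]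
  have h2 : 0 < 1 + z + z ^ 2 := by nlinarith [sq_nonneg (2 * z + 1)]
  have e1 : Real.exp (z - z ^ 2) ≤ (1 - z + z ^ 2)⁻¹ := by
    rw [show z - z ^ 2 = -(z ^ 2 - z) by ring, Real.exp_neg]
    exact inv_anti₀ h1 (by nlinarith [Real.add_one_le_exp (z ^ 2 - z)])
  have e2 : Real.exp (-z - z ^ 2) ≤ (1 + z + z ^ 2)⁻¹ := by
    rw [show -z - z ^ 2 = -(z ^ 2 + z) by ring, Real.exp_neg]
    exact inv_anti₀ h2 (by nlinarith [Real.add_one_le_exp (z ^ 2 + z)])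
  have key : (1 - z + z ^ 2)⁻¹ + (1 + z + z ^ 2)⁻¹ ≤ 2 := by
    rw [inv_add_inv h1.ne' h2.ne', div_le_iff₀ (mul_pos h1 h2)]
    nlinarith [sq_nonneg z, sq_nonneg (z ^ 2)]
  have hz1 : Real.exp z = Real.exp (z ^ 2) * Real.exp (z - z ^ 2) := by
    rw [← Real.exp_add]; ring_nf
  have hz2 : Real.exp (-z) = Real.exp (z ^ 2) * Real.exp (-z - z ^ 2) := by
    rw [← Real.exp_add]; ring_nf
  have hep : (0:ℝ) < Real.exp (z ^ 2) := Real.exp_pos _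
  rw [Real.cosh_eq, hz1, hz2]
  calc (Real.exp (z ^ 2) * Real.exp (z - z ^ 2) + Real.exp (z ^ 2) * Real.exp (-z - z ^ 2)) / 2
      = Real.exp (z ^ 2) * ((Real.exp (z - z ^ 2) + Real.exp (-z - z ^ 2)) / 2) := by ring
    _ ≤ Real.exp (z ^ 2) * 1 := by
        refine mul_le_mul_of_nonneg_left ?_ hep.le
        have := add_le_add e1 e2
        linarith
    _ = Real.exp (z ^ 2) := mul_one _

private lemma aux_sinh_le (r : ℝ) (hr : 0 ≤ r) : Real.sinh r ≤ r * Real.cosh r := by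
  have H : MonotoneOn (fun t => t * Real.cosh t - Real.sinh t) (Set.Ici (0:ℝ)) := by
    refine monotoneOn_of_deriv_nonneg (convex_Ici 0)
      ((continuous_id.mul Real.continuous_cosh).sub Real.continuous_sinh).continuousOn
      (fun x _ => (((hasDerivAt_id x).mul (Real.hasDerivAt_cosh x)).sub
        (Real.hasDerivAt_sinh x)).differentiableAt.differentiableWithinAt) ?_
    intro x hx
    rw [interior_Ici] at hx
    have hd : HasDerivAt (fun t => t * Real.cosh t - Real.sinh t)
        (1 * Real.cosh x + x * Real.sinh x - Real.cosh x) x :=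
      ((hasDerivAt_id x).mul (Real.hasDerivAt_cosh x)).sub (Real.hasDerivAt_sinh x)
    rw [hd.deriv]
    have hx' : (0:ℝ) < x := hx
    have hs : 0 ≤ Real.sinh x := Real.sinh_nonneg_iff.2 hx'.le
    nlinarith [mul_nonneg hx'.le hs]
  have h0 := H (Set.self_mem_Ici) hr hr
  simp only [Real.cosh_zero, Real.sinh_zero, mul_one, zero_mul, sub_zero] at h0
  linarith [h0]

private lemma aux_sinh_div_mono : MonotoneOn (fun r => Real.sinh r / r) (Set.Ioi (0:ℝ)) := by
  refine monotoneOn_of_deriv_nonneg (convex_Ioi 0)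
    (ContinuousOn.div Real.continuous_sinh.continuousOn continuousOn_id
      (fun x hx => ne_of_gt hx)) ?_ ?_
  · intro x hx
    rw [interior_Ioi] at hx
    exact ((Real.hasDerivAt_sinh x).div (hasDerivAt_id x)
      (ne_of_gt hx)).differentiableAt.differentiableWithinAt
  · intro x hx
    rw [interior_Ioi] at hx
    have hx' : (0:ℝ) < x := hx
    have hd : HasDerivAt (fun r => Real.sinh r / r)
        ((Real.cosh x * x - Real.sinh x * 1) / x ^ 2) x := by
      exact (Real.hasDerivAt_sinh x).div (hasDerivAt_id' x) (ne_of_gt hx')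
    rw [hd.deriv]
    have := aux_sinh_le x hx'.le
    have hx2 : (0:ℝ) < x ^ 2 := by positivity
    apply div_nonneg _ (le_of_lt hx2)
    nlinarith

private lemma aux_hasDeriv (l : ℝ) {x : ℝ} (hx : 0 < x) :
    HasDerivAt (fun a => Real.cosh (l * Real.sqrt a))
      (Real.sinh (l * Real.sqrt x) * (l * (1 / (2 * Real.sqrt x)))) x :=
  HasDerivAt.cosh ((Real.hasDerivAt_sqrt hx.ne').const_mul l)

private lemma aux_convex (l : ℝ) (hl : 0 ≤ l) :
    ConvexOn ℝ (Set.Ici 0) (fun a => Real.cosh (l * Real.sqrt a)) := by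
  rcases eq_or_lt_of_le hl with h0 | hl
  · simp only [← h0, zero_mul, Real.cosh_zero]
    exact convexOn_const 1 (convex_Ici 0)
  refine MonotoneOn.convexOn_of_deriv (convex_Ici 0)
    (Real.continuous_cosh.comp (continuous_const.mul Real.continuous_sqrt)).continuousOn
    ?_ ?_
  · intro x hx
    rw [interior_Ici] at hx
    exact (aux_hasDeriv l hx).differentiableAt.differentiableWithinAt
  · rw [interior_Ici]
    intro a ha c hc hac
    rw [Set.mem_Ioi] at ha hc
    rw [(aux_hasDeriv l ha).deriv, (aux_hasDeriv l hc).deriv]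
    have hsa : 0 < Real.sqrt a := Real.sqrt_pos.2 ha
    have hsc : 0 < Real.sqrt c := Real.sqrt_pos.2 hc
    have hp : 0 < l * Real.sqrt a := mul_pos hl hsa
    have hq : 0 < l * Real.sqrt c := mul_pos hl hsc
    have hpq : l * Real.sqrt a ≤ l * Real.sqrt c :=
      mul_le_mul_of_nonneg_left (Real.sqrt_le_sqrt hac) hl.le
    have hmono := aux_sinh_div_mono hp hq hpq
    have ea : Real.sinh (l * Real.sqrt a) * (l * (1 / (2 * Real.sqrt a)))
        = Real.sinh (l * Real.sqrt a) / (l * Real.sqrt a) * (l ^ 2 / 2) := by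
      field_simp
    have ec : Real.sinh (l * Real.sqrt c) * (l * (1 / (2 * Real.sqrt c)))
        = Real.sinh (l * Real.sqrt c) / (l * Real.sqrt c) * (l ^ 2 / 2) := by
      field_simp
    rw [ea, ec]
    exact mul_le_mul_of_nonneg_right hmono (by positivity)

private lemma aux_phi_mono (l : ℝ) (hl : 0 ≤ l) :
    MonotoneOn (fun a => Real.cosh (l * Real.sqrt a)) (Set.Ici 0) := by
  intro a _ c _ hac
  exact Real.cosh_le_cosh.2 (by
    rw [abs_mul, abs_mul, abs_of_nonneg hl, abs_of_nonneg (Real.sqrt_nonneg a),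
      abs_of_nonneg (Real.sqrt_nonneg c)]
    exact mul_le_mul_of_nonneg_left (Real.sqrt_le_sqrt hac) hl)

/-- The slope coefficient in the Pinelis pointwise inequality. -/
noncomputable def Bf (l b s : ℝ) : ℝ :=
  (Real.cosh (l * (s + b)) - Real.cosh (l * (s - b))) / (2 * s * b)

private lemma aux_pointwise {H : Type*} [NormedAddCommGroup H] [InnerProductSpace ℝ H]
    (l b : ℝ) (hl : 0 ≤ l) (hb : 0 < b) (x d : H) (hd : ‖d‖ ≤ b) :
    Real.cosh (l * ‖x + d‖) ≤
      Real.cosh (l * ‖x‖) * Real.cosh (l * b) + Bf l b ‖x‖ * (inner ℝ x d : ℝ) := by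
  rcases eq_or_lt_of_le (norm_nonneg x) with h0 | hs
  · -- x = 0
    have hx0 : x = 0 := norm_eq_zero.1 h0.symm
    subst hx0
    simp only [inner_zero_left, mul_zero, add_zero, norm_zero, mul_zero, Real.cosh_zero,
      one_mul, zero_add]
    exact Real.cosh_le_cosh.2 (by
      rw [abs_mul, abs_mul, abs_of_nonneg hl, abs_of_nonneg (norm_nonneg d),
        abs_of_nonneg hb.le]
      exact mul_le_mul_of_nonneg_left hd hl)
  · set s := ‖x‖ with hs_def
    set y : ℝ := (inner ℝ x d : ℝ) with hy_def
    have hsb : 0 < 2 * s * b := by positivity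
    have hy : |y| ≤ s * b := by
      refine (abs_real_inner_le_norm x d).trans ?_
      exact mul_le_mul_of_nonneg_left hd (norm_nonneg x)
    have hy1 : -(s * b) ≤ y := neg_le_of_abs_le hy
    have hy2 : y ≤ s * b := le_of_abs_le hy
    set θ₁ : ℝ := (s * b - y) / (2 * s * b) with hθ1
    set θ₂ : ℝ := (s * b + y) / (2 * s * b) with hθ2
    have hθ1n : 0 ≤ θ₁ := div_nonneg (by linarith) hsb.le
    have hθ2n : 0 ≤ θ₂ := div_nonneg (by linarith) hsb.le
    have hθsum : θ₁ + θ₂ = 1 := by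
      rw [hθ1, hθ2, ← add_div, div_eq_one_iff_eq hsb.ne']
      ring
    have hu : ((s - b) ^ 2 : ℝ) ∈ Set.Ici (0:ℝ) := Set.mem_Ici.2 (sq_nonneg _)
    have hv : ((s + b) ^ 2 : ℝ) ∈ Set.Ici (0:ℝ) := Set.mem_Ici.2 (sq_nonneg _)
    have hkey := (aux_convex l hl).2 hu hv hθ1n hθ2n hθsum
    have harg : θ₁ • ((s - b) ^ 2) + θ₂ • ((s + b) ^ 2) = s ^ 2 + b ^ 2 + 2 * y := by
      simp only [smul_eq_mul, hθ1, hθ2]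
      field_simp
      ring
    rw [harg] at hkey
    have habs : ∀ u : ℝ, Real.cosh (l * |u|) = Real.cosh (l * u) := by
      intro u
      rw [← Real.cosh_abs (l * u), abs_mul, abs_of_nonneg hl]
    have hφu : Real.cosh (l * Real.sqrt ((s - b) ^ 2)) = Real.cosh (l * (s - b)) := by
      rw [Real.sqrt_sq_eq_abs]; exact habs _
    have hφv : Real.cosh (l * Real.sqrt ((s + b) ^ 2)) = Real.cosh (l * (s + b)) := by
      rw [Real.sqrt_sq_eq_abs]; exact habs _
    simp only [smul_eq_mul, hφu, hφv] at hkey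
    -- monotonicity step
    have hnorm_sq : ‖x + d‖ ^ 2 = s ^ 2 + 2 * y + ‖d‖ ^ 2 := by
      rw [hs_def, hy_def]
      exact norm_add_sq_real x d
    have harg_nonneg : (0:ℝ) ≤ s ^ 2 + b ^ 2 + 2 * y := by nlinarith [sq_nonneg (s - b)]
    have hmono := aux_phi_mono l hl (Set.mem_Ici.2 (by positivity : (0:ℝ) ≤ ‖x + d‖ ^ 2))
      (Set.mem_Ici.2 harg_nonneg)
      (by nlinarith [pow_le_pow_left₀ (norm_nonneg d) hd 2] :
        ‖x + d‖ ^ 2 ≤ s ^ 2 + b ^ 2 + 2 * y)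
    have hstart : Real.cosh (l * ‖x + d‖)
        = Real.cosh (l * Real.sqrt (‖x + d‖ ^ 2)) := by
      rw [Real.sqrt_sq (norm_nonneg _)]
    -- cosh product identity
    have hP : Real.cosh (l * (s + b)) = Real.cosh (l * s) * Real.cosh (l * b)
        + Real.sinh (l * s) * Real.sinh (l * b) := by
      rw [show l * (s + b) = l * s + l * b by ring, Real.cosh_add]
    have hM : Real.cosh (l * (s - b)) = Real.cosh (l * s) * Real.cosh (l * b)
        - Real.sinh (l * s) * Real.sinh (l * b) := by
      rw [show l * (s - b) = l * s - l * b by ring, Real.cosh_sub]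
    have hfinal : θ₁ * Real.cosh (l * (s - b)) + θ₂ * Real.cosh (l * (s + b))
        = Real.cosh (l * s) * Real.cosh (l * b) + Bf l b s * y := by
      rw [hθ1, hθ2, Bf, hP, hM]
      field_simp
      ring
    calc Real.cosh (l * ‖x + d‖) = Real.cosh (l * Real.sqrt (‖x + d‖ ^ 2)) := hstart
      _ ≤ Real.cosh (l * Real.sqrt (s ^ 2 + b ^ 2 + 2 * y)) := hmono
      _ ≤ θ₁ * Real.cosh (l * (s - b)) + θ₂ * Real.cosh (l * (s + b)) := hkey
      _ = Real.cosh (l * s) * Real.cosh (l * b) + Bf l b s * y := hfinal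

private lemma aux_integral_inner_zero {Ω : Type*} {m m0 : MeasurableSpace Ω} {μ : Measure Ω}
    [IsFiniteMeasure μ] (hm : m ≤ m0) {H : Type*} [NormedAddCommGroup H]
    [InnerProductSpace ℝ H] [CompleteSpace H] {Y d : Ω → H} (hY : StronglyMeasurable[m] Y) {C : ℝ} (hC : 0 ≤ C)
    (hYb : ∀ᵐ ω ∂μ, ‖Y ω‖ ≤ C) (hd : Integrable d μ)
    (h0 : ∀ s, MeasurableSet[m] s → ∫ ω in s, d ω ∂μ = 0) :
    ∫ ω, (inner ℝ (Y ω) (d ω) : ℝ) ∂μ = 0 := by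
  have hint : ∀ (g : Ω → H), AEStronglyMeasurable g μ → (∃ c : ℝ, ∀ ω, ‖g ω‖ ≤ c) →
      Integrable (fun ω => (inner ℝ (g ω) (d ω) : ℝ)) μ := by
    rintro g hg ⟨c, hc⟩
    refine Integrable.mono' (hd.norm.const_mul c) (hg.inner hd.aestronglyMeasurable) ?_
    refine Filter.Eventually.of_forall fun ω => ?_
    calc ‖(inner ℝ (g ω) (d ω) : ℝ)‖ ≤ ‖g ω‖ * ‖d ω‖ := norm_inner_le_norm _ _
      _ ≤ c * ‖d ω‖ := mul_le_mul_of_nonneg_right (hc ω) (norm_nonneg _)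
  have hsimple : ∀ g : @SimpleFunc Ω m H, ∫ ω, (inner ℝ (g ω) (d ω) : ℝ) ∂μ = 0 := by
    intro g
    refine @SimpleFunc.induction Ω H m _
      (fun g => ∫ ω, (inner ℝ (g ω) (d ω) : ℝ) ∂μ = 0) ?_ ?_ g
    · intro c t ht
      classical
      have heq : (fun ω => (inner ℝ ((@SimpleFunc.piecewise Ω H m t ht (@SimpleFunc.const Ω H m c)
            (@SimpleFunc.const Ω H m 0)) ω) (d ω) : ℝ))
          = fun ω => t.indicator (fun ω => (inner ℝ c (d ω) : ℝ)) ω := by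
        classical
        funext ω
        rw [@SimpleFunc.piecewise_apply Ω H m t ht]
        by_cases hω : ω ∈ t
        · simp only [hω, if_true, Set.indicator_of_mem hω, SimpleFunc.coe_const,
            Function.const_apply]
        · simp only [hω, if_false, Set.indicator_of_notMem hω, SimpleFunc.coe_const,
            Function.const_apply, SimpleFunc.coe_zero, Pi.zero_apply, inner_zero_left]
      rw [heq, integral_indicator (hm t ht), integral_inner hd.integrableOn,
        h0 t ht, inner_zero_right]
    · intro g₁ g₂ _ h1 h2
      obtain ⟨c1, hc1⟩ := @SimpleFunc.exists_forall_norm_le Ω H m _ g₁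
      obtain ⟨c2, hc2⟩ := @SimpleFunc.exists_forall_norm_le Ω H m _ g₂
      have heq : (fun ω => (inner ℝ ((g₁ + g₂) ω) (d ω) : ℝ))
          = fun ω => (inner ℝ (g₁ ω) (d ω) : ℝ) + (inner ℝ (g₂ ω) (d ω) : ℝ) := by
        ext ω
        simp [inner_add_left]
      rw [heq, integral_add
        (hint _ ((g₁.stronglyMeasurable.mono hm).aestronglyMeasurable) ⟨c1, hc1⟩)
        (hint _ ((g₂.stronglyMeasurable.mono hm).aestronglyMeasurable) ⟨c2, hc2⟩), h1, h2,
        add_zero]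
  set g := hY.approxBounded C with hg
  have htend : ∀ᵐ ω ∂μ, Filter.Tendsto (fun n => g n ω) Filter.atTop (nhds (Y ω)) :=
    hY.tendsto_approxBounded_ae hYb
  have hbound : ∀ n ω, ‖g n ω‖ ≤ C := fun n ω => hY.norm_approxBounded_le hC n ω
  have hlim : Filter.Tendsto (fun n => ∫ ω, (inner ℝ (g n ω) (d ω) : ℝ) ∂μ) Filter.atTop
      (nhds (∫ ω, (inner ℝ (Y ω) (d ω) : ℝ) ∂μ)) := by
    refine tendsto_integral_of_dominated_convergence (fun ω => C * ‖d ω‖)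
      (fun n => ((g n).stronglyMeasurable.mono hm).aestronglyMeasurable.inner
        hd.aestronglyMeasurable)
      (hd.norm.const_mul C) ?_ ?_
    · intro n
      refine Filter.Eventually.of_forall fun ω => ?_
      calc ‖(inner ℝ (g n ω) (d ω) : ℝ)‖ ≤ ‖g n ω‖ * ‖d ω‖ := norm_inner_le_norm _ _
        _ ≤ C * ‖d ω‖ := mul_le_mul_of_nonneg_right (hbound n ω) (norm_nonneg _)
    · filter_upwards [htend] with ω hω
      exact hω.inner tendsto_const_nhds
  have hzero : Filter.Tendsto (fun _ : ℕ => (0:ℝ)) Filter.atTop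
      (nhds (∫ ω, (inner ℝ (Y ω) (d ω) : ℝ) ∂μ)) := by
    have : (fun n => ∫ ω, (inner ℝ (g n ω) (d ω) : ℝ) ∂μ) = fun _ : ℕ => (0:ℝ) := by
      funext n
      exact hsimple (g n)
    rwa [this] at hlim
  exact (tendsto_nhds_unique tendsto_const_nhds hzero).symm

end Aux

/-- Dimension-free concentration for Hilbert-space-valued martingales with bounded
differences: if `(N_t)` is an `H`-valued martingale with `N_0 = 0` and
`‖N_t − N_{t−1}‖ ≤ b_t` a.s., then for each `t` and `x > 0`,
`P(‖N_t‖ > x) ≤ 4 exp(−x²/(8 ∑_{τ=1}^t b_τ²))`, and consequently with probability at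
least `1 − δ`, `‖N_t‖ ≤ sqrt(8 (∑_{τ=1}^t b_τ²) log(4/δ))`. -/
theorem stmt5 {Ω : Type*} {m0 : MeasurableSpace Ω} {μ : Measure Ω} [IsProbabilityMeasure μ]
    {H : Type*} [NormedAddCommGroup H] [InnerProductSpace ℝ H] [CompleteSpace H]
    (ℱ : Filtration ℕ m0) (N : ℕ → Ω → H) (hN : Martingale N ℱ μ)
    (hN0 : ∀ᵐ ω ∂μ, N 0 ω = 0)
    (b : ℕ → ℝ) (hb : ∀ t, 0 < b t)
    (hbdd : ∀ t, ∀ᵐ ω ∂μ, ‖N t ω - N (t - 1) ω‖ ≤ b t) :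
    ∀ t : ℕ,
      (∀ x : ℝ, 0 < x →
        (μ {ω | x < ‖N t ω‖}).toReal ≤
          4 * Real.exp (-x ^ 2 / (8 * ∑ τ ∈ Finset.Icc 1 t, b τ ^ 2))) ∧
      (∀ δ : ℝ, 0 < δ → δ < 1 →
        1 - ENNReal.ofReal δ ≤
          μ {ω | ‖N t ω‖ ≤
            Real.sqrt (8 * (∑ τ ∈ Finset.Icc 1 t, b τ ^ 2) * Real.log (4 / δ))}) := by
  classical
  have hmeas : ∀ t, StronglyMeasurable[m0] (N t) := fun t => (hN.stronglyAdapted t).mono (ℱ.le t)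
  have hCnn : ∀ t, (0:ℝ) ≤ ∑ τ ∈ Finset.Icc 1 t, b τ :=
    fun t => Finset.sum_nonneg fun τ _ => (hb τ).le
  have hbddN : ∀ t, ∀ᵐ ω ∂μ, ‖N t ω‖ ≤ ∑ τ ∈ Finset.Icc 1 t, b τ := by
    intro t
    induction t with
    | zero => filter_upwards [hN0] with ω hω; simp [hω]
    | succ t ih =>
      filter_upwards [ih, hbdd (t + 1)] with ω h1 h2
      simp only [Nat.add_sub_cancel] at h2
      rw [Finset.sum_Icc_succ_top (by omega : 1 ≤ t + 1)]
      have hdecomp : N (t + 1) ω = N t ω + (N (t + 1) ω - N t ω) := by abel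
      calc ‖N (t + 1) ω‖ = ‖N t ω + (N (t + 1) ω - N t ω)‖ := by rw [← hdecomp]
        _ ≤ ‖N t ω‖ + ‖N (t + 1) ω - N t ω‖ := norm_add_le _ _
        _ ≤ (∑ τ ∈ Finset.Icc 1 t, b τ) + b (t + 1) := add_le_add h1 h2
  have hint_cosh : ∀ l : ℝ, 0 ≤ l → ∀ t,
      Integrable (fun ω => Real.cosh (l * ‖N t ω‖)) μ := by
    intro l hl t
    refine Integrable.mono'
      (integrable_const (Real.cosh (l * ∑ τ ∈ Finset.Icc 1 t, b τ))) ?_ ?_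
    · exact (Real.continuous_cosh.comp
        (continuous_const.mul continuous_norm)).comp_aestronglyMeasurable
        (hmeas t).aestronglyMeasurable
    · filter_upwards [hbddN t] with ω hω
      rw [Real.norm_eq_abs, abs_of_pos (Real.cosh_pos _)]
      refine Real.cosh_le_cosh.2 ?_
      rw [abs_mul, abs_mul, abs_of_nonneg hl, abs_of_nonneg (norm_nonneg _),
        abs_of_nonneg (hCnn t)]
      exact mul_le_mul_of_nonneg_left hω hl
  have key : ∀ l : ℝ, 0 ≤ l → ∀ t, ∫ ω, Real.cosh (l * ‖N t ω‖) ∂μ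
      ≤ Real.exp (l ^ 2 * ∑ τ ∈ Finset.Icc 1 t, b τ ^ 2) := by
    intro l hl t
    induction t with
    | zero =>
      have h1 : ∫ ω, Real.cosh (l * ‖N 0 ω‖) ∂μ = 1 := by
        have : ∫ ω, Real.cosh (l * ‖N 0 ω‖) ∂μ = ∫ _ : Ω, (1:ℝ) ∂μ := by
          apply integral_congr_ae
          filter_upwards [hN0] with ω hω
          simp [hω]
        rw [this]
        simp
      rw [h1]
      simp
    | succ t ih =>
      set b' := b (t + 1) with hb'_def
      set d := N (t + 1) - N t with hd_def
      have hd_int : Integrable d μ := (hN.integrable (t + 1)).sub (hN.integrable t)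
      have hzero : ∀ s : Set Ω, MeasurableSet[ℱ t] s → ∫ ω in s, d ω ∂μ = 0 := by
        intro s hs
        have hcond : μ[d|ℱ t] =ᵐ[μ] 0 := by
          have h1 := condExp_sub (m := ℱ t) (μ := μ) (hN.integrable (t + 1)) (hN.integrable t)
          have h2 := hN.condExp_ae_eq (Nat.le_succ t)
          have h3 := hN.condExp_ae_eq (le_refl t)
          filter_upwards [h1, h2, h3] with ω e1 e2 e3
          rw [hd_def, e1, Pi.sub_apply, e2, e3]
          simp
        rw [← setIntegral_condExp (ℱ.le t) hd_int hs]
        calc ∫ ω in s, (μ[d|ℱ t]) ω ∂μ = ∫ _ in s, (0:H) ∂μ := by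
              refine setIntegral_congr_ae (ℱ.le t s hs) ?_
              filter_upwards [hcond] with ω hω _
              exact hω
          _ = 0 := by simp
      set Y := fun ω => Bf l b' ‖N t ω‖ • N t ω with hY_def
      have hYsm : StronglyMeasurable[ℱ t] Y := by
        have hb_meas : Measurable fun s : ℝ => Bf l b' s := by
          unfold Bf
          exact ((Real.continuous_cosh.measurable.comp
              ((measurable_id.add_const b').const_mul l)).sub
            (Real.continuous_cosh.measurable.comp
              ((measurable_id.sub_const b').const_mul l))).div
            ((measurable_id.const_mul 2).mul_const b')
        exact ((hb_meas.comp (hN.stronglyAdapted t).norm.measurable).stronglyMeasurable).smul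
          (hN.stronglyAdapted t)
      have hb'pos : 0 < b' := hb (t + 1)
      set CY := Real.cosh (l * ((∑ τ ∈ Finset.Icc 1 t, b τ) + b')) / b' with hCY_def
      have hCYnn : 0 ≤ CY := div_nonneg (Real.cosh_pos _).le hb'pos.le
      have hYb : ∀ᵐ ω ∂μ, ‖Y ω‖ ≤ CY := by
        filter_upwards [hbddN t] with ω hω
        have hs0 : (0:ℝ) ≤ ‖N t ω‖ := norm_nonneg _
        rw [hY_def, norm_smul, Real.norm_eq_abs]
        rcases eq_or_lt_of_le hs0 with h | h
        · rw [← h, mul_zero]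
          exact hCYnn
        · set s := ‖N t ω‖ with hsdef
          have hcosh_bound : ∀ u : ℝ, |u| ≤ s + b' →
              Real.cosh (l * u) ≤ Real.cosh (l * ((∑ τ ∈ Finset.Icc 1 t, b τ) + b')) := by
            intro u hu
            refine Real.cosh_le_cosh.2 ?_
            rw [abs_mul, abs_mul, abs_of_nonneg hl,
              abs_of_nonneg (add_nonneg (hCnn t) hb'pos.le)]
            refine mul_le_mul_of_nonneg_left (hu.trans ?_) hl
            linarith [hω]
          have hsb : (0:ℝ) < 2 * s * b' := by nlinarith
          have h1 : |Bf l b' s| ≤ 2 * Real.cosh (l * ((∑ τ ∈ Finset.Icc 1 t, b τ) + b'))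
              / (2 * s * b') := by
            rw [Bf, abs_div, abs_of_pos hsb]
            refine (div_le_div_iff_of_pos_right hsb).2 ?_
            have hA := hcosh_bound (s + b') (le_of_eq (abs_of_pos (by nlinarith)))
            have hB := hcosh_bound (s - b') (abs_le.2 ⟨by nlinarith, by nlinarith⟩)
            have hApos := Real.cosh_pos (l * (s + b'))
            have hBpos := Real.cosh_pos (l * (s - b'))
            calc |Real.cosh (l * (s + b')) - Real.cosh (l * (s - b'))|
                ≤ |Real.cosh (l * (s + b'))| + |Real.cosh (l * (s - b'))| := by
                  rw [sub_eq_add_neg]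
                  exact (abs_add_le _ _).trans (by rw [abs_neg])
              _ = Real.cosh (l * (s + b')) + Real.cosh (l * (s - b')) := by
                  rw [abs_of_pos hApos, abs_of_pos hBpos]
              _ ≤ 2 * Real.cosh (l * ((∑ τ ∈ Finset.Icc 1 t, b τ) + b')) := by linarith
          calc |Bf l b' s| * s
              ≤ 2 * Real.cosh (l * ((∑ τ ∈ Finset.Icc 1 t, b τ) + b')) / (2 * s * b') * s :=
                mul_le_mul_of_nonneg_right h1 hs0
            _ = CY := by
                rw [hCY_def]
                field_simp
      have hptw : ∀ᵐ ω ∂μ, Real.cosh (l * ‖N (t + 1) ω‖) ≤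
          Real.cosh (l * ‖N t ω‖) * Real.cosh (l * b') + (inner ℝ (Y ω) (d ω) : ℝ) := by
        filter_upwards [hbdd (t + 1)] with ω hω
        simp only [Nat.add_sub_cancel] at hω
        have hsum : N (t + 1) ω = N t ω + d ω := by
          rw [hd_def, Pi.sub_apply]
          abel
        have hmain := aux_pointwise l b' hl hb'pos (N t ω) (d ω)
          (by rw [hd_def, Pi.sub_apply]; exact hω)
        rw [← hsum] at hmain
        refine hmain.trans (le_of_eq ?_)
        congr 1
        rw [hY_def, real_inner_smul_left]
      have hIY : Integrable (fun ω => (inner ℝ (Y ω) (d ω) : ℝ)) μ := by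
        refine Integrable.mono' (hd_int.norm.const_mul CY)
          (((hYsm.mono (ℱ.le t)).aestronglyMeasurable).inner hd_int.aestronglyMeasurable) ?_
        filter_upwards [hYb] with ω hω
        calc ‖(inner ℝ (Y ω) (d ω) : ℝ)‖ ≤ ‖Y ω‖ * ‖d ω‖ := norm_inner_le_norm _ _
          _ ≤ CY * ‖d ω‖ := mul_le_mul_of_nonneg_right hω (norm_nonneg _)
      have hI0 : ∫ ω, (inner ℝ (Y ω) (d ω) : ℝ) ∂μ = 0 :=
        aux_integral_inner_zero (ℱ.le t) hYsm hCYnn hYb hd_int hzero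
      have step : ∫ ω, Real.cosh (l * ‖N (t + 1) ω‖) ∂μ ≤
          Real.cosh (l * b') * ∫ ω, Real.cosh (l * ‖N t ω‖) ∂μ := by
        have hle := integral_mono_ae (hint_cosh l hl (t + 1))
          (((hint_cosh l hl t).mul_const (Real.cosh (l * b'))).add hIY) hptw
        simp only [Pi.add_apply] at hle
        rw [integral_add ((hint_cosh l hl t).mul_const _) hIY, hI0, add_zero,
          integral_mul_const] at hle
        linarith [hle]
      have hsum_succ : (∑ τ ∈ Finset.Icc 1 (t + 1), b τ ^ 2)
          = (∑ τ ∈ Finset.Icc 1 t, b τ ^ 2) + b (t + 1) ^ 2 :=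
        Finset.sum_Icc_succ_top (by omega : 1 ≤ t + 1) _
      calc ∫ ω, Real.cosh (l * ‖N (t + 1) ω‖) ∂μ
          ≤ Real.cosh (l * b') * ∫ ω, Real.cosh (l * ‖N t ω‖) ∂μ := step
        _ ≤ Real.cosh (l * b') * Real.exp (l ^ 2 * ∑ τ ∈ Finset.Icc 1 t, b τ ^ 2) :=
            mul_le_mul_of_nonneg_left ih (Real.cosh_pos _).le
        _ ≤ Real.exp ((l * b') ^ 2) * Real.exp (l ^ 2 * ∑ τ ∈ Finset.Icc 1 t, b τ ^ 2) :=
            mul_le_mul_of_nonneg_right (aux_cosh_le_exp_sq _) (Real.exp_nonneg _)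
        _ = Real.exp (l ^ 2 * ∑ τ ∈ Finset.Icc 1 (t + 1), b τ ^ 2) := by
            rw [← Real.exp_add, hsum_succ, hb'_def]
            ring_nf
  -- Part 1, as a standalone fact
  have hpart1 : ∀ t, ∀ x : ℝ, 0 < x →
      (μ {ω | x < ‖N t ω‖}).toReal ≤
        4 * Real.exp (-x ^ 2 / (8 * ∑ τ ∈ Finset.Icc 1 t, b τ ^ 2)) := by
    intro t x hx
    rcases Nat.eq_zero_or_pos t with ht0 | ht
    · subst ht0
      have hsum0 : (∑ τ ∈ Finset.Icc 1 0, b τ ^ 2) = 0 := by simp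
      rw [hsum0]
      norm_num
      calc (μ {ω | x < ‖N 0 ω‖}).toReal ≤ 1 := by
            have h1 : μ {ω | x < ‖N 0 ω‖} ≤ 1 := prob_le_one
            simpa using ENNReal.toReal_mono (by simp) h1
        _ ≤ 4 := by norm_num
    · set S := ∑ τ ∈ Finset.Icc 1 t, b τ ^ 2 with hS_def
      have hSpos : 0 < S :=
        Finset.sum_pos (fun τ _ => pow_pos (hb τ) 2) ⟨1, Finset.mem_Icc.2 ⟨le_refl 1, ht⟩⟩
      set l := x / (2 * S) with hl_def
      have hl : 0 ≤ l := by positivity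
      have hmark : Real.exp (l * x) / 2 * (μ {ω | x < ‖N t ω‖}).toReal ≤
          ∫ ω, Real.cosh (l * ‖N t ω‖) ∂μ := by
        have hsub : {ω | x < ‖N t ω‖} ⊆
            {ω | Real.exp (l * x) / 2 ≤ Real.cosh (l * ‖N t ω‖)} := by
          intro ω hω
          have h1 : Real.exp (l * x) ≤ Real.exp (l * ‖N t ω‖) :=
            Real.exp_le_exp.2 (mul_le_mul_of_nonneg_left (le_of_lt hω) hl)
          have h2 : Real.exp (l * ‖N t ω‖) / 2 ≤ Real.cosh (l * ‖N t ω‖) := by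
            rw [Real.cosh_eq]
            have := Real.exp_pos (-(l * ‖N t ω‖))
            linarith
          exact (by linarith : Real.exp (l * x) / 2 ≤ Real.cosh (l * ‖N t ω‖))
        have h3 := mul_meas_ge_le_integral_of_nonneg (μ := μ)
          (f := fun ω => Real.cosh (l * ‖N t ω‖))
          (Filter.Eventually.of_forall fun ω => (Real.cosh_pos _).le)
          (hint_cosh l hl t) (Real.exp (l * x) / 2)
        refine le_trans ?_ h3
        refine mul_le_mul_of_nonneg_left ?_ (by positivity)
        exact ENNReal.toReal_mono (measure_ne_top μ _) (measure_mono hsub)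
      have hepos : (0:ℝ) < Real.exp (l * x) / 2 := by positivity
      have hchain : (μ {ω | x < ‖N t ω‖}).toReal ≤ 2 * Real.exp (l ^ 2 * S - l * x) := by
        have hcosh_le := key l hl t
        rw [← hS_def] at hcosh_le
        have h4 : (μ {ω | x < ‖N t ω‖}).toReal ≤
            Real.exp (l ^ 2 * S) / (Real.exp (l * x) / 2) := by
          rw [le_div_iff₀ hepos]
          calc (μ {ω | x < ‖N t ω‖}).toReal * (Real.exp (l * x) / 2)
              = Real.exp (l * x) / 2 * (μ {ω | x < ‖N t ω‖}).toReal := by ring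
            _ ≤ ∫ ω, Real.cosh (l * ‖N t ω‖) ∂μ := hmark
            _ ≤ Real.exp (l ^ 2 * S) := hcosh_le
        refine h4.trans (le_of_eq ?_)
        rw [Real.exp_sub]
        field_simp
      have hval : l ^ 2 * S - l * x = -x ^ 2 / (4 * S) := by
        rw [hl_def]
        field_simp
        ring
      rw [hval] at hchain
      refine hchain.trans ?_
      have hmono : Real.exp (-x ^ 2 / (4 * S)) ≤ Real.exp (-x ^ 2 / (8 * S)) := by
        refine Real.exp_le_exp.2 ?_
        rw [div_le_div_iff₀ (by positivity) (by positivity)]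
        nlinarith [sq_nonneg x, hSpos]
      nlinarith [Real.exp_pos (-x ^ 2 / (8 * S)), hmono]
  intro t
  refine ⟨hpart1 t, ?_⟩
  intro δ hδ0 hδ1
  rcases Nat.eq_zero_or_pos t with ht0 | ht
  · subst ht0
    have hsm : MeasurableSet {ω | ‖N 0 ω‖ ≤
        Real.sqrt (8 * (∑ τ ∈ Finset.Icc 1 0, b τ ^ 2) * Real.log (4 / δ))} :=
      measurableSet_le (hmeas 0).norm.measurable measurable_const
    have hone : μ {ω | ‖N 0 ω‖ ≤
        Real.sqrt (8 * (∑ τ ∈ Finset.Icc 1 0, b τ ^ 2) * Real.log (4 / δ))} = 1 := by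
      rw [← prob_compl_eq_zero_iff hsm]
      refine measure_mono_null ?_ (ae_iff.1 hN0)
      intro ω hω
      simp only [Set.mem_compl_iff, Set.mem_setOf_eq, not_le] at hω
      simp only [Set.mem_setOf_eq]
      intro hc
      rw [hc] at hω
      simp only [norm_zero] at hω
      exact absurd hω (not_lt.2 (Real.sqrt_nonneg _))
    rw [hone]
    exact tsub_le_self.trans le_rfl
  · set S := ∑ τ ∈ Finset.Icc 1 t, b τ ^ 2 with hS_def
    have hSpos : 0 < S :=
      Finset.sum_pos (fun τ _ => pow_pos (hb τ) 2) ⟨1, Finset.mem_Icc.2 ⟨le_refl 1, ht⟩⟩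
    have hlog : 0 < Real.log (4 / δ) := by
      refine Real.log_pos ?_
      rw [lt_div_iff₀ hδ0]
      linarith
    set x := Real.sqrt (8 * S * Real.log (4 / δ)) with hx_def
    have hxpos : 0 < x := Real.sqrt_pos.2 (by positivity)
    have hA := hpart1 t x hxpos
    rw [← hS_def] at hA
    have hx2 : x ^ 2 = 8 * S * Real.log (4 / δ) := Real.sq_sqrt (by positivity)
    have hexp : 4 * Real.exp (-x ^ 2 / (8 * S)) = δ := by
      rw [hx2, show -(8 * S * Real.log (4 / δ)) / (8 * S) = -Real.log (4 / δ) by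
        field_simp]
      rw [Real.exp_neg, Real.exp_log (by positivity)]
      field_simp
    rw [hexp] at hA
    have hmeasA : MeasurableSet {ω | x < ‖N t ω‖} :=
      measurableSet_lt measurable_const (hmeas t).norm.measurable
    have hcompl : {ω | ‖N t ω‖ ≤ x} = {ω | x < ‖N t ω‖}ᶜ := by
      ext ω
      simp [not_lt]
    have hμA : μ {ω | x < ‖N t ω‖} ≤ ENNReal.ofReal δ := by
      rw [← ENNReal.ofReal_toReal (measure_ne_top μ {ω | x < ‖N t ω‖})]
      exact ENNReal.ofReal_le_ofReal hA
    rw [hcompl, measure_compl hmeasA (measure_ne_top μ _), measure_univ]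
    exact tsub_le_tsub_left hμA 1
end
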